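/- Let k ≥ 1, d ≥ 4, and n ≥ k(d-1)+2 be integers. Let T = T₁ ∨ T₂ ∨ ⋯ ∨ T_{d+1} be the sequential join with T₁ = T_{d+1} = K₁ and T₂ = ⋯ = T_d = K_k, and let G be the graph obtained from T by adding a clique R on n - (kd-k+2) new vertices and joining every vertex of R to every vertex of T₂ ∪ T₃ ∪ T₄. Then G is a simple k-connected graph of order n and diameter d with exactly ((3d-5)k² + (5-d)k)/2 + C(n-kd+k-2, 2) + 3k(n-kd+k-2) edges. -/

import Mathlib

/-- A graph is `k`-connected if it has more than `k` vertices and remains connected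
whenever fewer than `k` vertices are deleted. -/
def SimpleGraph.KConnected {V : Type*} [Fintype V] (k : ℕ) (G : SimpleGraph V) : Prop :=
  k < Fintype.card V ∧ ∀ S : Set V, S.ncard < k → (G.induce Sᶜ).Connected

/-- The level of a vertex `v < k*(d-1)+2` in the sequential join
`T = T₁ ∨ T₂ ∨ ⋯ ∨ T_{d+1}` with `T₁ = T_{d+1} = K₁` and `T₂ = ⋯ = T_d = K_k`:
vertex `0` is the vertex of `T₁` (level `0`), vertices `1, …, k*(d-1)` form the middle
copies of `K_k` (levels `1, …, d-1`, `k` vertices each), and vertex `k*(d-1)+1` is the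
vertex of `T_{d+1}` (level `d`). -/
def oreLevel (k d v : ℕ) : ℕ :=
  if v = 0 then 0 else if v ≤ k * (d - 1) then (v - 1) / k + 1 else d

/-- The extremal graph for Ore's theorem when `d ≥ 4`: the first `k*(d-1)+2` vertices form
the sequential join `T = K₁ ∨ K_k ∨ ⋯ ∨ K_k ∨ K₁` (two distinct vertices of `T` are adjacent
iff their levels differ by at most `1`), the remaining `n - (k*(d-1)+2)` vertices form a
clique `R`, and every vertex of `R` is joined to every vertex of `T₂ ∪ T₃ ∪ T₄`
(the vertices of `T` of levels `1`, `2` and `3`). -/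
def oreExtremalGraph (k d n : ℕ) : SimpleGraph (Fin n) :=
  SimpleGraph.fromRel fun v w =>
    (v.val < k * (d - 1) + 2 ∧ w.val < k * (d - 1) + 2 ∧
      oreLevel k d v.val ≤ oreLevel k d w.val + 1 ∧
      oreLevel k d w.val ≤ oreLevel k d v.val + 1)
    ∨ (k * (d - 1) + 2 ≤ v.val ∧ k * (d - 1) + 2 ≤ w.val)
    ∨ (k * (d - 1) + 2 ≤ v.val ∧ w.val < k * (d - 1) + 2 ∧
        1 ≤ oreLevel k d w.val ∧ oreLevel k d w.val ≤ 3)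


section OreAux
variable {k d n : ℕ}

lemma lev_zero : oreLevel k d 0 = 0 := by simp [oreLevel]

lemma lev_mid (h1 : 1 ≤ v) (h2 : v ≤ k * (d-1)) :
    oreLevel k d v = (v-1)/k + 1 := by
  rw [oreLevel, if_neg (by omega), if_pos h2]

lemma lev_last : oreLevel k d (k*(d-1)+1) = d := by
  rw [oreLevel, if_neg (by omega), if_neg (by omega)]

lemma lev_le_iff (hk : 1 ≤ k) {v b : ℕ} (h1 : 1 ≤ v) (h2 : v ≤ k * (d-1)) :
    oreLevel k d v ≤ b + 1 ↔ v ≤ (b+1)*k := by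
  rw [lev_mid h1 h2]
  have h : (v-1)/k < b+1 ↔ v - 1 < (b+1)*k := Nat.div_lt_iff_lt_mul (by omega)
  omega

lemma le_lev_iff (hk : 1 ≤ k) {v b : ℕ} (h1 : 1 ≤ v) (h2 : v ≤ k * (d-1)) :
    b + 1 ≤ oreLevel k d v ↔ b*k + 1 ≤ v := by
  rw [lev_mid h1 h2]
  have h : b ≤ (v-1)/k ↔ b*k ≤ v-1 := Nat.le_div_iff_mul_le (by omega)
  omega

lemma lev_range (hk : 1 ≤ k) (hd : 4 ≤ d) {v : ℕ} (h1 : 1 ≤ v) (h2 : v ≤ k * (d-1)) :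
    1 ≤ oreLevel k d v ∧ oreLevel k d v ≤ d - 1 := by
  constructor
  · rw [le_lev_iff hk h1 h2 (b := 0)]; omega
  · have h := (lev_le_iff hk h1 h2 (b := d - 2)).mpr (by rw [show d-2+1 = d-1 from by omega, Nat.mul_comm]; exact h2)
    omega

lemma lev_eq_iff (hk : 1 ≤ k) {v a : ℕ} (h1 : 1 ≤ v) (h2 : v ≤ k * (d-1)) (ha : 1 ≤ a) :
    oreLevel k d v = a ↔ (a-1)*k + 1 ≤ v ∧ v ≤ a*k := by
  have e1 := le_lev_iff hk h1 h2 (b := a - 1)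
  have e2 := lev_le_iff hk h1 h2 (b := a - 1)
  have : a - 1 + 1 = a := by omega
  rw [this] at e1 e2
  omega




lemma adj_iff {v w : Fin n} :
    (oreExtremalGraph k d n).Adj v w ↔ v ≠ w ∧
      ((v.val < k*(d-1)+2 ∧ w.val < k*(d-1)+2 ∧
          oreLevel k d v.val ≤ oreLevel k d w.val + 1 ∧
          oreLevel k d w.val ≤ oreLevel k d v.val + 1)
       ∨ (k*(d-1)+2 ≤ v.val ∧ k*(d-1)+2 ≤ w.val)
       ∨ (k*(d-1)+2 ≤ v.val ∧ w.val < k*(d-1)+2 ∧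
            1 ≤ oreLevel k d w.val ∧ oreLevel k d w.val ≤ 3)
       ∨ (k*(d-1)+2 ≤ w.val ∧ v.val < k*(d-1)+2 ∧
            1 ≤ oreLevel k d v.val ∧ oreLevel k d v.val ≤ 3)) := by
  rw [oreExtremalGraph, SimpleGraph.fromRel_adj]
  constructor
  · rintro ⟨hne, (⟨a,b,c,e⟩|h|h) | (⟨a,b,c,e⟩|h|h)⟩
    · exact ⟨hne, Or.inl ⟨a,b,c,e⟩⟩
    · exact ⟨hne, Or.inr (Or.inl h)⟩
    · exact ⟨hne, Or.inr (Or.inr (Or.inl h))⟩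
    · exact ⟨hne, Or.inl ⟨b,a,e,c⟩⟩
    · exact ⟨hne, Or.inr (Or.inl ⟨h.2, h.1⟩)⟩
    · exact ⟨hne, Or.inr (Or.inr (Or.inr h))⟩
  · rintro ⟨hne, (h|h|h|h)⟩
    · exact ⟨hne, Or.inl (Or.inl h)⟩
    · exact ⟨hne, Or.inl (Or.inr (Or.inl h))⟩
    · exact ⟨hne, Or.inl (Or.inr (Or.inr h))⟩
    · exact ⟨hne, Or.inr (Or.inr (Or.inr h))⟩

lemma adj_TT {v w : Fin n} (hv : v.val < k*(d-1)+2) (hw : w.val < k*(d-1)+2)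
    (hne : v ≠ w) (h1 : oreLevel k d v.val ≤ oreLevel k d w.val + 1)
    (h2 : oreLevel k d w.val ≤ oreLevel k d v.val + 1) :
    (oreExtremalGraph k d n).Adj v w :=
  adj_iff.mpr ⟨hne, Or.inl ⟨hv, hw, h1, h2⟩⟩

lemma adj_RR {v w : Fin n} (hv : k*(d-1)+2 ≤ v.val) (hw : k*(d-1)+2 ≤ w.val)
    (hne : v ≠ w) : (oreExtremalGraph k d n).Adj v w :=
  adj_iff.mpr ⟨hne, Or.inr (Or.inl ⟨hv, hw⟩)⟩

lemma adj_RT {v w : Fin n} (hv : k*(d-1)+2 ≤ v.val) (hw : w.val < k*(d-1)+2)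
    (h1 : 1 ≤ oreLevel k d w.val) (h2 : oreLevel k d w.val ≤ 3) :
    (oreExtremalGraph k d n).Adj v w :=
  adj_iff.mpr ⟨by intro h; rw [h] at hv; omega, Or.inr (Or.inr (Or.inl ⟨hv, hw, h1, h2⟩))⟩


lemma lev_rep (hk : 1 ≤ k) {i : ℕ} (hi1 : 1 ≤ i) (hi2 : i ≤ d-1) :
    oreLevel k d ((i-1)*k+1) = i := by
  have e1 : (i-1)*k + k = i*k := by
    rw [Nat.sub_one_mul]
    have := Nat.le_mul_of_pos_left k (show 0 < i by omega)
    omega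
  have e2 : i*k ≤ (d-1)*k := Nat.mul_le_mul_right k hi2
  have e3 : k*(d-1) = (d-1)*k := Nat.mul_comm _ _
  rw [lev_eq_iff hk (by omega) (by omega) hi1]
  omega

lemma lev_le_d (hk : 1 ≤ k) (hd : 4 ≤ d) {x : ℕ} (hx : x < k*(d-1)+2) :
    oreLevel k d x ≤ d := by
  rcases Nat.eq_zero_or_pos x with h0 | h1
  · subst h0; rw [lev_zero]; omega
  rcases Nat.lt_or_ge (k*(d-1)) x with h2 | h2
  · have : x = k*(d-1)+1 := by omega
    subst this; rw [lev_last]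
  · have := (lev_range hk hd h1 h2).2
    omega

lemma lev_eq_zero_iff (hk : 1 ≤ k) (hd : 4 ≤ d) {x : ℕ} (hx : x < k*(d-1)+2) :
    oreLevel k d x = 0 ↔ x = 0 := by
  constructor
  · intro h
    by_contra hne
    rcases Nat.lt_or_ge (k*(d-1)) x with h2 | h2
    · have : x = k*(d-1)+1 := by omega
      subst this; rw [lev_last] at h; omega
    · have := (lev_range hk hd (by omega) h2).1
      omega
  · intro h; subst h; exact lev_zero

lemma edist_chain (hk : 1 ≤ k) (hd : 4 ≤ d) (hn : k*(d-1)+2 ≤ n) :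
    ∀ (j : ℕ) (u v : Fin n), u.val < k*(d-1)+2 → v.val < k*(d-1)+2 →
      oreLevel k d v.val = oreLevel k d u.val + (j+1) → oreLevel k d v.val ≤ d →
      (oreExtremalGraph k d n).edist u v ≤ (j+1 : ℕ) := by
  intro j
  induction j with
  | zero =>
    intro u v hu hv hlev hvd
    have hne : u ≠ v := by
      intro h; rw [h] at hlev; omega
    have hadj : (oreExtremalGraph k d n).Adj u v :=
      adj_TT hu hv hne (by omega) (by omega)
    calc (oreExtremalGraph k d n).edist u v ≤ 1 :=
          (SimpleGraph.edist_eq_one_iff_adj.mpr hadj).le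
      _ = ((0+1 : ℕ) : ℕ∞) := by norm_num
  | succ j ih =>
    intro u v hu hv hlev hvd
    set i := oreLevel k d u.val + (j+1) with hi
    have hi1 : 1 ≤ i := by omega
    have hi2 : i ≤ d - 1 := by omega
    have hxval : (i-1)*k+1 ≤ k*(d-1) := by
      have e1 : (i-1)*k + k = i*k := by
        rw [Nat.sub_one_mul]
        have := Nat.le_mul_of_pos_left k (show 0 < i by omega)
        omega
      have e2 : i*k ≤ (d-1)*k := Nat.mul_le_mul_right k hi2
      have e3 : k*(d-1) = (d-1)*k := Nat.mul_comm _ _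
      omega
    set x : Fin n := ⟨(i-1)*k+1, by omega⟩ with hx
    have hlevx : oreLevel k d x.val = i := lev_rep hk hi1 hi2
    have h1 : (oreExtremalGraph k d n).edist u x ≤ (j+1 : ℕ) :=
      ih u x hu (by simp [hx]; omega) (by omega) (by omega)
    have hadj : (oreExtremalGraph k d n).Adj x v :=
      adj_TT (by simp [hx]; omega) hv (by intro h; rw [h] at hlevx; omega)
        (by omega) (by omega)
    calc (oreExtremalGraph k d n).edist u v
        ≤ (oreExtremalGraph k d n).edist u x + (oreExtremalGraph k d n).edist x v :=
          SimpleGraph.edist_triangle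
      _ ≤ ((j+1 : ℕ) : ℕ∞) + 1 :=
          add_le_add h1 (SimpleGraph.edist_eq_one_iff_adj.mpr hadj).le
      _ = ((j+1+1 : ℕ) : ℕ∞) := by push_cast; ring

lemma edist_le_TT (hk : 1 ≤ k) (hd : 4 ≤ d) (hn : k*(d-1)+2 ≤ n) {u v : Fin n}
    (hu : u.val < k*(d-1)+2) (hv : v.val < k*(d-1)+2)
    (hlev : oreLevel k d u.val ≤ oreLevel k d v.val) :
    (oreExtremalGraph k d n).edist u v ≤ (d : ℕ∞) := by
  rcases eq_or_ne u v with rfl | hne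
  · simp [SimpleGraph.edist_self]
  rcases Nat.eq_or_lt_of_le hlev with heq | hlt
  · have hadj : (oreExtremalGraph k d n).Adj u v :=
      adj_TT hu hv hne (by omega) (by omega)
    calc (oreExtremalGraph k d n).edist u v ≤ 1 :=
        (SimpleGraph.edist_eq_one_iff_adj.mpr hadj).le
      _ ≤ (d : ℕ∞) := by exact_mod_cast Nat.one_le_cast.mpr (by omega)
  · have hvd := lev_le_d hk hd hv
    have hj : oreLevel k d v.val = oreLevel k d u.val +
        ((oreLevel k d v.val - oreLevel k d u.val - 1) + 1) := by omega
    have := edist_chain hk hd hn _ u v hu hv hj hvd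
    calc (oreExtremalGraph k d n).edist u v
        ≤ ((oreLevel k d v.val - oreLevel k d u.val - 1 + 1 : ℕ) : ℕ∞) := this
      _ ≤ (d : ℕ∞) := Nat.cast_le.mpr (by omega)

lemma edist_le_RT (hk : 1 ≤ k) (hd : 4 ≤ d) (hn : k*(d-1)+2 ≤ n) {u v : Fin n}
    (hu : k*(d-1)+2 ≤ u.val) (hv : v.val < k*(d-1)+2) :
    (oreExtremalGraph k d n).edist u v ≤ (d : ℕ∞) := by
  set b := oreLevel k d v.val with hb
  have hbd : b ≤ d := lev_le_d hk hd hv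
  rcases Nat.lt_or_ge b 1 with hb0 | hb1
  · -- b = 0, so v = 0
    have hv0 : v.val = 0 := (lev_eq_zero_iff hk hd hv).mp (by omega)
    obtain ⟨x, hxval⟩ : ∃ x : Fin n, x.val = 1 := ⟨⟨1, by omega⟩, rfl⟩
    have hlevx : oreLevel k d x.val = 1 := by
      rw [hxval]
      have := lev_rep (d := d) hk (i := 1) le_rfl (by omega)
      simpa using this
    have h1 : (oreExtremalGraph k d n).Adj u x :=
      adj_RT hu (by omega) (by omega) (by omega)
    have h2 : (oreExtremalGraph k d n).Adj x v := by
      have hlevv : oreLevel k d v.val = 0 := by rw [hv0]; exact lev_zero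
      exact adj_TT (by omega) hv
        (fun h => by rw [h, hlevv] at hlevx; omega) (by omega) (by omega)
    calc (oreExtremalGraph k d n).edist u v
        ≤ (oreExtremalGraph k d n).edist u x + (oreExtremalGraph k d n).edist x v :=
          SimpleGraph.edist_triangle
      _ ≤ 1 + 1 := add_le_add (SimpleGraph.edist_eq_one_iff_adj.mpr h1).le
            (SimpleGraph.edist_eq_one_iff_adj.mpr h2).le
      _ ≤ (d : ℕ∞) := by exact_mod_cast (by omega : (1+1 : ℕ) ≤ d)
  rcases Nat.lt_or_ge 3 b with hb4 | hb3
  · -- b ≥ 4: go through level 3 rep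
    have h3d : 3 ≤ d - 1 := by omega
    have hxval : (3-1)*k+1 ≤ k*(d-1) := by
      have e2 : 3*k ≤ (d-1)*k := Nat.mul_le_mul_right k h3d
      have e3 : k*(d-1) = (d-1)*k := Nat.mul_comm _ _
      omega
    set x : Fin n := ⟨(3-1)*k+1, by omega⟩ with hx
    have hlevx : oreLevel k d x.val = 3 := lev_rep hk (by omega) h3d
    have h1 : (oreExtremalGraph k d n).Adj u x :=
      adj_RT hu (by simp [hx]; omega) (by omega) (by omega)
    have h2 : (oreExtremalGraph k d n).edist x v ≤ ((b - 3 - 1) + 1 : ℕ) :=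
      edist_chain hk hd hn _ x v (by simp [hx]; omega) hv (by omega) (by omega)
    calc (oreExtremalGraph k d n).edist u v
        ≤ (oreExtremalGraph k d n).edist u x + (oreExtremalGraph k d n).edist x v :=
          SimpleGraph.edist_triangle
      _ ≤ 1 + ((b - 3 - 1) + 1 : ℕ) := add_le_add
            (SimpleGraph.edist_eq_one_iff_adj.mpr h1).le h2
      _ = ((1 + (b - 3 - 1 + 1) : ℕ) : ℕ∞) := by push_cast; ring
      _ ≤ (d : ℕ∞) := Nat.cast_le.mpr (by omega)
  · -- 1 ≤ b ≤ 3 : adjacent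
    have h1 : (oreExtremalGraph k d n).Adj u v := adj_RT hu hv hb1 hb3
    calc (oreExtremalGraph k d n).edist u v ≤ 1 :=
        (SimpleGraph.edist_eq_one_iff_adj.mpr h1).le
      _ ≤ (d : ℕ∞) := by exact_mod_cast (by omega : (1 : ℕ) ≤ d)

lemma edist_le_diam_bound (hk : 1 ≤ k) (hd : 4 ≤ d) (hn : k*(d-1)+2 ≤ n) (u v : Fin n) :
    (oreExtremalGraph k d n).edist u v ≤ (d : ℕ∞) := by
  rcases Nat.lt_or_ge u.val (k*(d-1)+2) with hu | hu <;>
    rcases Nat.lt_or_ge v.val (k*(d-1)+2) with hv | hv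
  · rcases le_total (oreLevel k d u.val) (oreLevel k d v.val) with h | h
    · exact edist_le_TT hk hd hn hu hv h
    · rw [SimpleGraph.edist_comm]; exact edist_le_TT hk hd hn hv hu h
  · rw [SimpleGraph.edist_comm]; exact edist_le_RT hk hd hn hv hu
  · exact edist_le_RT hk hd hn hu hv
  · rcases eq_or_ne u v with rfl | hne
    · simp [SimpleGraph.edist_self]
    · calc (oreExtremalGraph k d n).edist u v ≤ 1 :=
          (SimpleGraph.edist_eq_one_iff_adj.mpr (adj_RR hu hv hne)).le
        _ ≤ (d : ℕ∞) := by exact_mod_cast (by omega : (1 : ℕ) ≤ d)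

def oreF (k d x : ℕ) : ℕ := if x < k*(d-1)+2 then oreLevel k d x else 2

lemma oreF_adj (hk : 1 ≤ k) (hd : 4 ≤ d) {u v : Fin n}
    (h : (oreExtremalGraph k d n).Adj u v) :
    oreF k d u.val ≤ oreF k d v.val + 1 := by
  rcases adj_iff.mp h with ⟨-, ⟨hu, hv, h1, h2⟩ | ⟨hu, hv⟩ | ⟨hu, hv, h1, h2⟩ | ⟨hv, hu, h1, h2⟩⟩
  · rw [oreF, oreF, if_pos hu, if_pos hv]; omega
  · rw [oreF, oreF, if_neg (by omega), if_neg (by omega)]; omega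
  · rw [oreF, oreF, if_neg (by omega), if_pos hv]; omega
  · rw [oreF, oreF, if_pos hu, if_neg (by omega)]; omega

lemma oreF_le_length (hk : 1 ≤ k) (hd : 4 ≤ d) {u v : Fin n}
    (p : (oreExtremalGraph k d n).Walk u v) :
    oreF k d u.val ≤ oreF k d v.val + p.length := by
  induction p with
  | nil => simp
  | cons h q ih =>
    have := oreF_adj hk hd h
    rw [SimpleGraph.Walk.length_cons]
    omega

lemma le_edist_ends (hk : 1 ≤ k) (hd : 4 ≤ d) (hn : k*(d-1)+2 ≤ n)
    {u v : Fin n} (hu : u.val = 0) (hv : v.val = k*(d-1)+1) :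
    (d : ℕ∞) ≤ (oreExtremalGraph k d n).edist u v := by
  rw [SimpleGraph.edist_eq_sInf]
  apply le_sInf
  rintro b ⟨p, rfl⟩
  have h := oreF_le_length hk hd p.reverse
  rw [SimpleGraph.Walk.length_reverse, oreF, oreF, hu, hv] at h
  rw [if_pos (show (0:ℕ) < k*(d-1)+2 by omega),
    if_pos (show k*(d-1)+1 < k*(d-1)+2 by omega), lev_zero, lev_last] at h
  exact Nat.cast_le.mpr (by omega)

lemma oreDiam_eq (hk : 1 ≤ k) (hd : 4 ≤ d) (hn : k*(d-1)+2 ≤ n) :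
    (oreExtremalGraph k d n).diam = d := by
  have he : (oreExtremalGraph k d n).ediam = (d : ℕ∞) := by
    apply le_antisymm
    · exact SimpleGraph.ediam_le_of_edist_le (edist_le_diam_bound hk hd hn)
    · exact le_trans (le_edist_ends hk hd hn (u := ⟨0, by omega⟩)
        (v := ⟨k*(d-1)+1, by omega⟩) rfl rfl) SimpleGraph.edist_le_ediam
  rw [SimpleGraph.diam, he, ENat.toNat_coe]

lemma exists_rep_avoid (hk : 1 ≤ k) (hd : 4 ≤ d) (hn : k*(d-1)+2 ≤ n) {S : Set (Fin n)}
    (hS : S.ncard < k) {i : ℕ} (hi1 : 1 ≤ i) (hi2 : i ≤ d-1) :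
    ∃ x : Fin n, x ∉ S ∧ 1 ≤ x.val ∧ x.val ≤ k*(d-1) ∧ oreLevel k d x.val = i := by
  have e1 : (i-1)*k + k = i*k := by
    rw [Nat.sub_one_mul]
    have := Nat.le_mul_of_pos_left k (show 0 < i by omega)
    omega
  have e2 : i*k ≤ (d-1)*k := Nat.mul_le_mul_right k hi2
  have e3 : k*(d-1) = (d-1)*k := Nat.mul_comm _ _
  have hlt : ∀ j : Fin k, (i-1)*k+1+j.val < n := fun j => by have := j.isLt; omega
  set g : Fin k → Fin n := fun j => ⟨(i-1)*k+1+j.val, hlt j⟩ with hg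
  have hginj : Function.Injective g := by
    intro a b hab
    have : (g a).val = (g b).val := by rw [hab]
    simp only [hg] at this
    exact Fin.ext (by omega)
  by_contra hcon
  push_neg at hcon
  have hsub : ↑(Finset.image g Finset.univ) ⊆ S := by
    intro x hx
    simp only [Finset.coe_image, Set.mem_image] at hx
    obtain ⟨j, -, rfl⟩ := hx
    by_contra hxS
    refine absurd (hcon (g j) hxS (by simp only [hg]; omega) (by simp only [hg]; have := j.isLt; omega) ?_) (by simp)
    rw [lev_eq_iff hk (by simp only [hg]; omega) (by simp only [hg]; have := j.isLt; omega) hi1]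
    simp only [hg]
    have := j.isLt
    omega
  have hcard : (Finset.image g Finset.univ).card = k := by
    rw [Finset.card_image_of_injective _ hginj, Finset.card_univ, Fintype.card_fin]
  have := Set.ncard_le_ncard hsub S.toFinite
  rw [Set.ncard_coe_finset, hcard] at this
  omega

lemma induce_connected (hk : 1 ≤ k) (hd : 4 ≤ d) (hn : k*(d-1)+2 ≤ n) {S : Set (Fin n)}
    (hS : S.ncard < k) : ((oreExtremalGraph k d n).induce Sᶜ).Connected := by
  classical
  have hrep : ∀ i : ℕ, ∃ x : Fin n, 1 ≤ i → i ≤ d-1 →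
      (x ∉ S ∧ 1 ≤ x.val ∧ x.val ≤ k*(d-1) ∧ oreLevel k d x.val = i) := by
    intro i
    by_cases h : 1 ≤ i ∧ i ≤ d-1
    · obtain ⟨x, hx⟩ := exists_rep_avoid hk hd hn hS h.1 h.2
      exact ⟨x, fun _ _ => hx⟩
    · exact ⟨⟨0, by omega⟩, fun h1 h2 => absurd ⟨h1, h2⟩ h⟩
  choose r hr using hrep
  set W := (oreExtremalGraph k d n).induce Sᶜ with hW
  have memc : ∀ i, 1 ≤ i → i ≤ d-1 → r i ∈ Sᶜ := fun i h1 h2 => (hr i h1 h2).1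
  have h1d : (1:ℕ) ≤ d-1 := by omega
  have hWadj : ∀ (x y : Fin n) (hx : x ∈ Sᶜ) (hy : y ∈ Sᶜ),
      (oreExtremalGraph k d n).Adj x y → W.Adj ⟨x, hx⟩ ⟨y, hy⟩ := by
    intro x y hx hy h
    exact h
  have chain : ∀ i, (h1 : 1 ≤ i) → (h2 : i ≤ d-1) →
      W.Reachable ⟨r i, memc i h1 h2⟩ ⟨r 1, memc 1 le_rfl h1d⟩ := by
    intro i
    induction i with
    | zero => intro h1 h2; omega
    | succ j ih =>
      intro h1 h2
      by_cases hj : j = 0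
      · subst hj; exact SimpleGraph.Reachable.refl _
      · have hj1 : 1 ≤ j := by omega
        have hj2 : j ≤ d-1 := by omega
        obtain ⟨-, hx1, hx2, hlevx⟩ := hr (j+1) h1 h2
        obtain ⟨-, hy1, hy2, hlevy⟩ := hr j hj1 hj2
        have hadj : (oreExtremalGraph k d n).Adj (r (j+1)) (r j) :=
          adj_TT (by omega) (by omega)
            (fun h => by rw [h, hlevy] at hlevx; omega) (by omega) (by omega)
        exact (hWadj _ _ (memc (j+1) h1 h2) (memc j hj1 hj2) hadj).reachable.trans
          (ih hj1 hj2)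
  have toBase : ∀ x : ↥Sᶜ, W.Reachable x ⟨r 1, memc 1 le_rfl h1d⟩ := by
    intro ⟨x, hx⟩
    obtain ⟨-, hy1, hy2, hlevy⟩ := hr 1 le_rfl h1d
    rcases Nat.eq_zero_or_pos x.val with h0 | hpos
    · have hadj : (oreExtremalGraph k d n).Adj x (r 1) := by
        refine adj_TT (by omega) (by omega) (fun h => by rw [h] at h0; omega) ?_ ?_
        · have : oreLevel k d x.val = 0 := by rw [h0]; exact lev_zero
          omega
        · have : oreLevel k d x.val = 0 := by rw [h0]; exact lev_zero
          omega
      exact (hWadj _ _ hx (memc 1 le_rfl h1d) hadj).reachable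
    rcases Nat.lt_or_ge (k*(d-1)+1) x.val with hbig | hmid
    · -- x in R
      have hadj : (oreExtremalGraph k d n).Adj x (r 1) :=
        adj_RT (by omega) (by omega) (by omega) (by omega)
      exact (hWadj _ _ hx (memc 1 le_rfl h1d) hadj).reachable
    rcases Nat.lt_or_ge (k*(d-1)) x.val with hlast | hmid2
    · -- x is the last vertex of T, level d
      have hxval : x.val = k*(d-1)+1 := by omega
      have hlevx : oreLevel k d x.val = d := by rw [hxval]; exact lev_last
      obtain ⟨-, hz1, hz2, hlevz⟩ := hr (d-1) h1d le_rfl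
      have hadj : (oreExtremalGraph k d n).Adj x (r (d-1)) :=
        adj_TT (by omega) (by omega)
          (fun h => by rw [h, hlevz] at hlevx; omega) (by omega) (by omega)
      exact (hWadj _ _ hx (memc (d-1) h1d le_rfl) hadj).reachable.trans
        (chain (d-1) h1d le_rfl)
    · -- x is a middle vertex
      set a := oreLevel k d x.val with ha
      have har := lev_range hk hd hpos hmid2
      obtain ⟨-, hz1, hz2, hlevz⟩ := hr a har.1 har.2
      by_cases hxr : x = r a
      · have : (⟨x, hx⟩ : ↥Sᶜ) = ⟨r a, memc a har.1 har.2⟩ := Subtype.ext hxr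
        rw [this]
        exact chain a har.1 har.2
      · have hadj : (oreExtremalGraph k d n).Adj x (r a) :=
          adj_TT (by omega) (by omega) hxr (by omega) (by omega)
        exact (hWadj _ _ hx (memc a har.1 har.2) hadj).reachable.trans
          (chain a har.1 har.2)
  rw [SimpleGraph.connected_iff]
  exact ⟨fun x y => (toBase x).trans (toBase y).symm, ⟨⟨r 1, memc 1 le_rfl h1d⟩⟩⟩

lemma card_filter_val {N : ℕ} (p : ℕ → Prop) [DecidablePred p] :
    ((Finset.univ : Finset (Fin N)).filter (fun v => p v.val)).card
      = ((Finset.range N).filter p).card := by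
  apply Finset.card_bij (fun v _ => v.val)
  · intro a ha
    simp only [Finset.mem_filter, Finset.mem_range] at *
    exact ⟨a.isLt, ha.2⟩
  · intro a _ b _ h
    exact Fin.ext h
  · intro b hb
    simp only [Finset.mem_filter, Finset.mem_range] at hb
    exact ⟨⟨b, hb.1⟩, by simp [hb.2], rfl⟩

lemma card_val_Icc {N : ℕ} (lo hi : ℕ) (h : hi < N) :
    ((Finset.univ : Finset (Fin N)).filter (fun w => lo ≤ w.val ∧ w.val ≤ hi)).card
      = hi + 1 - lo := by
  rw [card_filter_val (fun x => lo ≤ x ∧ x ≤ hi)]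
  rw [show (Finset.range N).filter (fun x => lo ≤ x ∧ x ≤ hi) = Finset.Icc lo hi by
    ext x
    simp only [Finset.mem_filter, Finset.mem_range, Finset.mem_Icc]
    omega]
  rw [Nat.card_Icc]

lemma degree_eq_of_iff [DecidableRel (oreExtremalGraph k d n).Adj]
    (v : Fin n) (lo hi lo2 hi2 : ℕ)
    (hiff : ∀ w : Fin n, (oreExtremalGraph k d n).Adj v w ↔
      ((w ≠ v ∧ lo ≤ w.val ∧ w.val ≤ hi) ∨ (lo2 ≤ w.val ∧ w.val ≤ hi2)))
    (hv1 : lo ≤ v.val) (hv2 : v.val ≤ hi) (hhi : hi < n) (hhi2 : hi2 < n)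
    (hdisj : hi < lo2 ∨ hi2 < lo) :
    (oreExtremalGraph k d n).degree v = (hi + 1 - lo) - 1 + (hi2 + 1 - lo2) := by
  classical
  rw [← SimpleGraph.card_neighborFinset_eq_degree, SimpleGraph.neighborFinset_eq_filter]
  have hset : Finset.univ.filter ((oreExtremalGraph k d n).Adj v) =
      ((Finset.univ.filter (fun w : Fin n => lo ≤ w.val ∧ w.val ≤ hi)).erase v)
        ∪ (Finset.univ.filter (fun w : Fin n => lo2 ≤ w.val ∧ w.val ≤ hi2)) := by
    ext w
    simp only [Finset.mem_filter, Finset.mem_union, Finset.mem_erase, Finset.mem_univ,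
      true_and, and_true]
    rw [hiff w]
  have hmem : v ∈ Finset.univ.filter (fun w : Fin n => lo ≤ w.val ∧ w.val ≤ hi) := by
    simp only [Finset.mem_filter, Finset.mem_univ, true_and]
    exact ⟨hv1, hv2⟩
  have hdis : Disjoint
      ((Finset.univ.filter (fun w : Fin n => lo ≤ w.val ∧ w.val ≤ hi)).erase v)
      (Finset.univ.filter (fun w : Fin n => lo2 ≤ w.val ∧ w.val ≤ hi2)) := by
    rw [Finset.disjoint_left]
    intro w hw1 hw2
    simp only [Finset.mem_filter, Finset.mem_erase, Finset.mem_univ, true_and] at hw1 hw2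
    omega
  rw [hset, Finset.card_union_of_disjoint hdis, Finset.card_erase_of_mem hmem,
    card_val_Icc _ _ hhi, card_val_Icc _ _ hhi2]

lemma deg_zero (hk : 1 ≤ k) (hd : 4 ≤ d) (hn : k*(d-1)+2 ≤ n)
    [DecidableRel (oreExtremalGraph k d n).Adj] (v : Fin n) (hv : v.val = 0) :
    (oreExtremalGraph k d n).degree v = k := by
  have e3 : k*(d-1) = (d-1)*k := Nat.mul_comm _ _
  have h1k : 1*k ≤ (d-1)*k := Nat.mul_le_mul_right k (by omega)
  have hiff : ∀ w : Fin n, (oreExtremalGraph k d n).Adj v w ↔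
      ((w ≠ v ∧ 0 ≤ w.val ∧ w.val ≤ k) ∨ (n ≤ w.val ∧ w.val ≤ n-1)) := by
    intro w
    rw [adj_iff]
    have hvlev : oreLevel k d v.val = 0 := by rw [hv]; exact lev_zero
    constructor
    · rintro ⟨hne, ⟨hv', hw', h1, h2⟩ | ⟨hv', hw'⟩ | ⟨hv', hw', hl1, hl3⟩ | ⟨hw', hv', hl1, hl3⟩⟩
      · refine Or.inl ⟨hne.symm, by omega, ?_⟩
        rcases Nat.eq_zero_or_pos w.val with hw0 | hwpos
        · omega
        rcases Nat.lt_or_ge (k*(d-1)) w.val with hbig | hmid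
        · have hwlev : oreLevel k d w.val = d := by
            rw [show w.val = k*(d-1)+1 from by omega]; exact lev_last
          omega
        · have := (lev_le_iff (d := d) hk hwpos hmid (b := 0)).mp (by omega)
          omega
      · omega
      · omega
      · omega
    · rintro (⟨hne, -, hwk⟩ | ⟨hn', -⟩)
      · refine ⟨hne.symm, Or.inl ⟨by omega, by omega, by omega, ?_⟩⟩
        have hwpos : 1 ≤ w.val := by
          rcases Nat.eq_zero_or_pos w.val with h0 | h
          · exact absurd (Fin.ext (by omega)) hne
          · exact h
        have := (lev_le_iff (d := d) hk hwpos (by omega) (b := 0)).mpr (by omega)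
        omega
      · have := w.isLt; omega
  have := degree_eq_of_iff v 0 k n (n-1) hiff (by omega) (by omega) (by omega)
    (by omega) (by omega)
  omega

lemma deg_last (hk : 1 ≤ k) (hd : 4 ≤ d) (hn : k*(d-1)+2 ≤ n)
    [DecidableRel (oreExtremalGraph k d n).Adj] (v : Fin n) (hv : v.val = k*(d-1)+1) :
    (oreExtremalGraph k d n).degree v = k := by
  have e3 : k*(d-1) = (d-1)*k := Nat.mul_comm _ _
  have e4 : (d-2+1)*k = (d-1)*k := by rw [show d-2+1 = d-1 from by omega]
  have e5 : (d-2+1)*k = (d-2)*k + 1*k := Nat.add_mul _ _ _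
  have h1k : 1*k ≤ (d-2)*k := Nat.mul_le_mul_right k (by omega)
  have hvlev : oreLevel k d v.val = d := by rw [hv]; exact lev_last
  have hiff : ∀ w : Fin n, (oreExtremalGraph k d n).Adj v w ↔
      ((w ≠ v ∧ (d-2)*k+1 ≤ w.val ∧ w.val ≤ k*(d-1)+1) ∨ (n ≤ w.val ∧ w.val ≤ n-1)) := by
    intro w
    rw [adj_iff]
    constructor
    · rintro ⟨hne, ⟨hv', hw', h1, h2⟩ | ⟨hv', hw'⟩ | ⟨hv', hw', hl1, hl3⟩ | ⟨hw', hv', hl1, hl3⟩⟩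
      · refine Or.inl ⟨hne.symm, ?_, by omega⟩
        rcases Nat.eq_zero_or_pos w.val with hw0 | hwpos
        · have hwlev : oreLevel k d w.val = 0 := by rw [hw0]; exact lev_zero
          omega
        rcases Nat.lt_or_ge (k*(d-1)) w.val with hbig | hmid
        · omega
        · have := (le_lev_iff (d := d) hk hwpos hmid (b := d-2)).mp (by omega)
          omega
      · omega
      · omega
      · omega
    · rintro (⟨hne, hwlo, hwhi⟩ | ⟨hn', -⟩)
      · have hwv : w.val ≠ v.val := fun h => hne (Fin.ext h)
        have hwpos : 1 ≤ w.val := by omega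
        refine ⟨hne.symm, Or.inl ⟨by omega, by omega, ?_, ?_⟩⟩
        · rcases Nat.lt_or_ge (k*(d-1)) w.val with hbig | hmid
          · have hwlev : oreLevel k d w.val = d := by
              rw [show w.val = k*(d-1)+1 from by omega]; exact lev_last
            omega
          · have := (le_lev_iff (d := d) hk hwpos hmid (b := d-2)).mpr (by omega)
            omega
        · rcases Nat.lt_or_ge (k*(d-1)) w.val with hbig | hmid
          · have hwlev : oreLevel k d w.val = d := by
              rw [show w.val = k*(d-1)+1 from by omega]; exact lev_last
            omega
          · have := (lev_range hk hd hwpos hmid).2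
            omega
      · have := w.isLt; omega
  have := degree_eq_of_iff v ((d-2)*k+1) (k*(d-1)+1) n (n-1) hiff (by omega) (by omega)
    (by omega) (by omega) (by omega)
  omega

lemma deg_R (hk : 1 ≤ k) (hd : 4 ≤ d) (hn : k*(d-1)+2 ≤ n)
    [DecidableRel (oreExtremalGraph k d n).Adj] (v : Fin n) (hv : k*(d-1)+2 ≤ v.val) :
    (oreExtremalGraph k d n).degree v = (n - (k*(d-1)+2) - 1) + 3*k := by
  have e3 : k*(d-1) = (d-1)*k := Nat.mul_comm _ _
  have h3k : 3*k ≤ (d-1)*k := Nat.mul_le_mul_right k (by omega)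
  have e6 : (2+1)*k = 3*k := by norm_num
  have hiff : ∀ w : Fin n, (oreExtremalGraph k d n).Adj v w ↔
      ((w ≠ v ∧ k*(d-1)+2 ≤ w.val ∧ w.val ≤ n-1) ∨ (1 ≤ w.val ∧ w.val ≤ 3*k)) := by
    intro w
    have hwn := w.isLt
    rw [adj_iff]
    constructor
    · rintro ⟨hne, ⟨hv', hw', h1, h2⟩ | ⟨hv', hw'⟩ | ⟨hv', hw', hl1, hl3⟩ | ⟨hw', hv', hl1, hl3⟩⟩
      · omega
      · exact Or.inl ⟨hne.symm, hw', by omega⟩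
      · refine Or.inr ⟨?_, ?_⟩
        · rcases Nat.eq_zero_or_pos w.val with hw0 | hwpos
          · have hwlev : oreLevel k d w.val = 0 := by rw [hw0]; exact lev_zero
            omega
          · omega
        · rcases Nat.eq_zero_or_pos w.val with hw0 | hwpos
          · omega
          rcases Nat.lt_or_ge (k*(d-1)) w.val with hbig | hmid
          · have hwlev : oreLevel k d w.val = d := by
              rw [show w.val = k*(d-1)+1 from by omega]; exact lev_last
            omega
          · have := (lev_le_iff (d := d) hk hwpos hmid (b := 2)).mp (by omega)
            omega
      · exact Or.inl ⟨hne.symm, hw', by omega⟩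
    · rintro (⟨hne, hwlo, hwhi⟩ | ⟨hwpos, hw3k⟩)
      · exact ⟨hne.symm, Or.inr (Or.inl ⟨hv, hwlo⟩)⟩
      · have hwv : w.val ≠ v.val := by omega
        have hwm : w.val ≤ k*(d-1) := by omega
        refine ⟨fun h => hwv (congrArg Fin.val h).symm, Or.inr (Or.inr (Or.inl ⟨hv, by omega, ?_, ?_⟩))⟩
        · have := (le_lev_iff (d := d) hk hwpos hwm (b := 0)).mpr (by omega)
          omega
        · have := (lev_le_iff (d := d) hk hwpos hwm (b := 2)).mpr (by omega)
          omega
  have := degree_eq_of_iff v (k*(d-1)+2) (n-1) 1 (3*k) hiff (by omega) (by omega)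
    (by omega) (by omega) (by omega)
  omega

lemma deg_mid (hk : 1 ≤ k) (hd : 4 ≤ d) (hn : k*(d-1)+2 ≤ n)
    [DecidableRel (oreExtremalGraph k d n).Adj] (v : Fin n)
    (hv1 : 1 ≤ v.val) (hv2 : v.val ≤ k*(d-1)) :
    (oreExtremalGraph k d n).degree v =
      (if v.val ≤ k then 2*k else if v.val ≤ (d-2)*k then 3*k-1 else 2*k)
      + (if v.val ≤ 3*k then n - (k*(d-1)+2) else 0) := by
  have e3 : k*(d-1) = (d-1)*k := Nat.mul_comm _ _
  set a := oreLevel k d v.val with ha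
  have har := lev_range hk hd hv1 hv2
  have hchar : (a-1)*k + 1 ≤ v.val ∧ v.val ≤ a*k :=
    (lev_eq_iff hk hv1 hv2 har.1).mp rfl
  -- the R-side cutoff
  set L2 : ℕ := if a ≤ 3 then k*(d-1)+2 else n with hL2
  have hL2m : k*(d-1)+2 ≤ L2 := by
    rw [hL2]; split <;> omega
  have hL2n : L2 ≤ n := by
    rw [hL2]; split <;> omega
  have hflag : (n-1) + 1 - L2 = if v.val ≤ 3*k then n - (k*(d-1)+2) else 0 := by
    by_cases h3 : a ≤ 3
    · have hak : a*k ≤ 3*k := Nat.mul_le_mul_right k h3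
      rw [hL2, if_pos h3, if_pos (by omega)]
      omega
    · have hak : 3*k ≤ (a-1)*k := Nat.mul_le_mul_right k (by omega)
      rw [hL2, if_neg h3, if_neg (by omega)]
      omega
  have hRside : ∀ w : Fin n, (k*(d-1)+2 ≤ w.val ∧ v.val < k*(d-1)+2 ∧ 1 ≤ a ∧ a ≤ 3)
      ↔ (L2 ≤ w.val ∧ w.val ≤ n-1) := by
    intro w
    have hwn := w.isLt
    rw [hL2]
    constructor
    · rintro ⟨h1, h2, h3, h4⟩
      rw [if_pos h4]
      omega
    · rintro ⟨h1, h2⟩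
      by_cases h3 : a ≤ 3
      · rw [if_pos h3] at h1; omega
      · rw [if_neg h3] at h1; omega
  by_cases ha1 : a = 1
  · -- level 1
    have h2k : (1+1)*k = 2*k := by norm_num
    have h2kd : 2*k ≤ (d-1)*k := Nat.mul_le_mul_right k (by omega)
    have hiff : ∀ w : Fin n, (oreExtremalGraph k d n).Adj v w ↔
        ((w ≠ v ∧ 0 ≤ w.val ∧ w.val ≤ 2*k) ∨ (L2 ≤ w.val ∧ w.val ≤ n-1)) := by
      intro w
      have hwn := w.isLt
      rw [adj_iff]
      constructor
      · rintro ⟨hne, ⟨hv', hw', h1, h2⟩ | ⟨hv', hw'⟩ | ⟨hv', hw', hl1, hl3⟩ | ⟨hw', hv', hl1, hl3⟩⟩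
        · refine Or.inl ⟨hne.symm, by omega, ?_⟩
          rcases Nat.eq_zero_or_pos w.val with hw0 | hwpos
          · omega
          rcases Nat.lt_or_ge (k*(d-1)) w.val with hbig | hmid
          · have hwlev : oreLevel k d w.val = d := by
              rw [show w.val = k*(d-1)+1 from by omega]; exact lev_last
            omega
          · have := (lev_le_iff (d := d) hk hwpos hmid (b := 1)).mp (by omega)
            omega
        · omega
        · omega
        · exact Or.inr ((hRside w).mp ⟨hw', hv', by omega, by omega⟩)
      · rintro (⟨hne, -, hwhi⟩ | hR)
        · refine ⟨hne.symm, Or.inl ⟨by omega, by omega, by omega, ?_⟩⟩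
          rcases Nat.eq_zero_or_pos w.val with hw0 | hwpos
          · have hwlev : oreLevel k d w.val = 0 := by rw [hw0]; exact lev_zero
            omega
          · have := (lev_le_iff (d := d) hk hwpos (by omega) (b := 1)).mpr (by omega)
            omega
        · obtain ⟨h1, h2, h3, h4⟩ := (hRside w).mpr hR
          exact ⟨fun h => by omega, Or.inr (Or.inr (Or.inr ⟨h1, h2, by omega, by omega⟩))⟩
    have hdeg := degree_eq_of_iff v 0 (2*k) L2 (n-1) hiff (by omega)
      (by have := hchar.2; have : a*k = 1*k := by rw [ha1]
          omega)
      (by omega) (by omega) (by omega)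
    have hvk : v.val ≤ k := by
      have : a*k = 1*k := by rw [ha1]
      omega
    rw [if_pos hvk, hdeg, hflag]
    have h3k : k ≤ 3*k := by omega
    omega
  by_cases had : a = d-1
  · -- level d-1
    have e4 : (d-3+1)*k = (d-3)*k + 1*k := Nat.add_mul _ _ _
    have e5 : (d-3+1)*k = (d-2)*k := by rw [show d-3+1 = d-2 from by omega]
    have e6 : (d-2+1)*k = (d-2)*k + 1*k := Nat.add_mul _ _ _
    have e7 : (d-2+1)*k = (d-1)*k := by rw [show d-2+1 = d-1 from by omega]
    have hiff : ∀ w : Fin n, (oreExtremalGraph k d n).Adj v w ↔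
        ((w ≠ v ∧ (d-3)*k+1 ≤ w.val ∧ w.val ≤ k*(d-1)+1) ∨ (L2 ≤ w.val ∧ w.val ≤ n-1)) := by
      intro w
      have hwn := w.isLt
      rw [adj_iff]
      constructor
      · rintro ⟨hne, ⟨hv', hw', h1, h2⟩ | ⟨hv', hw'⟩ | ⟨hv', hw', hl1, hl3⟩ | ⟨hw', hv', hl1, hl3⟩⟩
        · refine Or.inl ⟨hne.symm, ?_, by omega⟩
          rcases Nat.eq_zero_or_pos w.val with hw0 | hwpos
          · have hwlev : oreLevel k d w.val = 0 := by rw [hw0]; exact lev_zero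
            omega
          rcases Nat.lt_or_ge (k*(d-1)) w.val with hbig | hmid
          · omega
          · have := (le_lev_iff (d := d) hk hwpos hmid (b := d-3)).mp (by omega)
            omega
        · omega
        · omega
        · exact Or.inr ((hRside w).mp ⟨hw', hv', by omega, by omega⟩)
      · rintro (⟨hne, hwlo, hwhi⟩ | hR)
        · have hwpos : 1 ≤ w.val := by omega
          refine ⟨hne.symm, Or.inl ⟨by omega, by omega, ?_, ?_⟩⟩
          · rcases Nat.lt_or_ge (k*(d-1)) w.val with hbig | hmid
            · have hwlev : oreLevel k d w.val = d := by
                rw [show w.val = k*(d-1)+1 from by omega]; exact lev_last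
              omega
            · have := (le_lev_iff (d := d) hk hwpos hmid (b := d-3)).mpr (by omega)
              omega
          · rcases Nat.lt_or_ge (k*(d-1)) w.val with hbig | hmid
            · have hwlev : oreLevel k d w.val = d := by
                rw [show w.val = k*(d-1)+1 from by omega]; exact lev_last
              omega
            · have := (lev_range hk hd hwpos hmid).2
              omega
        · obtain ⟨h1, h2, h3, h4⟩ := (hRside w).mpr hR
          exact ⟨fun h => by omega, Or.inr (Or.inr (Or.inr ⟨h1, h2, by omega, by omega⟩))⟩
    have hva : (d-2)*k + 1 ≤ v.val := by
      have : (a-1)*k = (d-2)*k := by rw [had, show d-1-1 = d-2 from by omega]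
      omega
    have hdeg := degree_eq_of_iff v ((d-3)*k+1) (k*(d-1)+1) L2 (n-1) hiff
      (by have : (d-3)*k ≤ (d-2)*k := Nat.mul_le_mul_right k (by omega); omega)
      (by omega) (by omega) (by omega) (by omega)
    have hvk : ¬ (v.val ≤ k) := by
      have : 1*k ≤ (d-2)*k := Nat.mul_le_mul_right k (by omega)
      omega
    rw [if_neg hvk, if_neg (by omega), hdeg, hflag]
    omega
  · -- middle levels 2..d-2
    have ha2 : 2 ≤ a := by omega
    have had2 : a ≤ d-2 := by omega
    have f1 : (a+1)*k ≤ (d-1)*k := Nat.mul_le_mul_right k (by omega)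
    have f2 : (a-2)*k ≤ (a-1)*k := Nat.mul_le_mul_right k (by omega)
    have f3 : a*k ≤ (a+1)*k := Nat.mul_le_mul_right k (by omega)
    have f4 : (a-2+3)*k = (a-2)*k + 3*k := Nat.add_mul _ _ _
    have f5 : (a-2+3)*k = (a+1)*k := by rw [show a-2+3 = a+1 from by omega]
    have f6 : a*k ≤ (d-2)*k := Nat.mul_le_mul_right k (by omega)
    have f7 : 1*k ≤ (a-1)*k := Nat.mul_le_mul_right k (by omega)
    have hiff : ∀ w : Fin n, (oreExtremalGraph k d n).Adj v w ↔
        ((w ≠ v ∧ (a-2)*k+1 ≤ w.val ∧ w.val ≤ (a+1)*k) ∨ (L2 ≤ w.val ∧ w.val ≤ n-1)) := by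
      intro w
      have hwn := w.isLt
      rw [adj_iff]
      constructor
      · rintro ⟨hne, ⟨hv', hw', h1, h2⟩ | ⟨hv', hw'⟩ | ⟨hv', hw', hl1, hl3⟩ | ⟨hw', hv', hl1, hl3⟩⟩
        · refine Or.inl ⟨hne.symm, ?_, ?_⟩
          · rcases Nat.eq_zero_or_pos w.val with hw0 | hwpos
            · have hwlev : oreLevel k d w.val = 0 := by rw [hw0]; exact lev_zero
              omega
            rcases Nat.lt_or_ge (k*(d-1)) w.val with hbig | hmid
            · have hwlev : oreLevel k d w.val = d := by
                rw [show w.val = k*(d-1)+1 from by omega]; exact lev_last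
              omega
            · have := (le_lev_iff (d := d) hk hwpos hmid (b := a-2)).mp (by omega)
              omega
          · rcases Nat.eq_zero_or_pos w.val with hw0 | hwpos
            · omega
            rcases Nat.lt_or_ge (k*(d-1)) w.val with hbig | hmid
            · have hwlev : oreLevel k d w.val = d := by
                rw [show w.val = k*(d-1)+1 from by omega]; exact lev_last
              omega
            · have := (lev_le_iff (d := d) hk hwpos hmid (b := a)).mp (by omega)
              omega
        · omega
        · omega
        · exact Or.inr ((hRside w).mp ⟨hw', hv', by omega, by omega⟩)
      · rintro (⟨hne, hwlo, hwhi⟩ | hR)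
        · have hwpos : 1 ≤ w.val := by omega
          have hmid : w.val ≤ k*(d-1) := by omega
          have g1 := (le_lev_iff (d := d) hk hwpos hmid (b := a-2)).mpr (by omega)
          have g2 := (lev_le_iff (d := d) hk hwpos hmid (b := a)).mpr (by omega)
          exact ⟨hne.symm, Or.inl ⟨by omega, by omega, by omega, by omega⟩⟩
        · obtain ⟨h1, h2, h3, h4⟩ := (hRside w).mpr hR
          exact ⟨fun h => by omega, Or.inr (Or.inr (Or.inr ⟨h1, h2, by omega, by omega⟩))⟩
    have hdeg := degree_eq_of_iff v ((a-2)*k+1) ((a+1)*k) L2 (n-1) hiff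
      (by omega) (by omega) (by omega) (by omega) (by omega)
    rw [if_neg (by omega), if_pos (by omega), hdeg, hflag]
    omega

def oreD (k d n x : ℕ) : ℕ :=
  if x = 0 then k
  else if x ≤ k then 2*k + (n - (k*(d-1)+2))
  else if x ≤ (d-2)*k then 3*k-1 + (if x ≤ 3*k then n - (k*(d-1)+2) else 0)
  else if x ≤ (d-1)*k then 2*k + (if x ≤ 3*k then n - (k*(d-1)+2) else 0)
  else if x = (d-1)*k+1 then k
  else n - (k*(d-1)+2) - 1 + 3*k

lemma deg_eq_D (hk : 1 ≤ k) (hd : 4 ≤ d) (hn : k*(d-1)+2 ≤ n)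
    [DecidableRel (oreExtremalGraph k d n).Adj] (v : Fin n) :
    (oreExtremalGraph k d n).degree v = oreD k d n v.val := by
  have e3 : k*(d-1) = (d-1)*k := Nat.mul_comm _ _
  have f1 : 1*k ≤ (d-2)*k := Nat.mul_le_mul_right k (by omega)
  have f2 : (d-2)*k ≤ (d-1)*k := Nat.mul_le_mul_right k (by omega)
  rcases Nat.eq_zero_or_pos v.val with h0 | hpos
  · rw [deg_zero hk hd hn v h0, oreD, if_pos h0]
  rcases Nat.lt_or_ge (k*(d-1)+1) v.val with hbig | hrest
  · rw [deg_R hk hd hn v (by omega), oreD]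
    split_ifs <;> omega
  rcases Nat.lt_or_ge (k*(d-1)) v.val with hlast | hmid
  · rw [deg_last hk hd hn v (by omega), oreD]
    split_ifs <;> omega
  · rw [deg_mid hk hd hn v hpos hmid, oreD]
    split_ifs <;> omega

lemma sum_oreD (hk : 1 ≤ k) (hd : 4 ≤ d) (hn : k*(d-1)+2 ≤ n) :
    ∑ x ∈ Finset.range n, oreD k d n x
      = k + k * (2*k + (n - (k*(d-1)+2)))
        + (min (3*k) ((d-2)*k) - k) * (3*k - 1 + (n - (k*(d-1)+2)))
        + ((d-2)*k - min (3*k) ((d-2)*k)) * (3*k - 1)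
        + (max ((d-2)*k) (min (3*k) ((d-1)*k)) - (d-2)*k) * (2*k + (n - (k*(d-1)+2)))
        + ((d-1)*k - max ((d-2)*k) (min (3*k) ((d-1)*k))) * (2*k)
        + k
        + (n - (k*(d-1)+2)) * (n - (k*(d-1)+2) - 1 + 3*k) := by
  have e3 : k*(d-1) = (d-1)*k := Nat.mul_comm _ _
  have f1 : 1*k ≤ (d-2)*k := Nat.mul_le_mul_right k (by omega)
  have f2 : (d-2)*k ≤ (d-1)*k := Nat.mul_le_mul_right k (by omega)
  set c := min (3*k) ((d-2)*k) with hc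
  set c' := max ((d-2)*k) (min (3*k) ((d-1)*k)) with hc'
  have hck : k ≤ c := by omega
  have hcd : c ≤ (d-2)*k := by omega
  have hc'1 : (d-2)*k ≤ c' := by omega
  have hc'2 : c' ≤ (d-1)*k := by omega
  have hB0 : ∑ x ∈ Finset.Ico 0 1, oreD k d n x = k := by
    rw [show Finset.Ico 0 1 = {0} from rfl, Finset.sum_singleton, oreD, if_pos rfl]
  have hB1 : ∑ x ∈ Finset.Ico 1 (k+1), oreD k d n x = k * (2*k + (n - (k*(d-1)+2))) := by
    rw [Finset.sum_congr rfl (g := fun _ => 2*k + (n - (k*(d-1)+2)))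
      (fun x hx => by
        rw [Finset.mem_Ico] at hx
        rw [oreD, if_neg (by omega), if_pos (by omega)]),
      Finset.sum_const, Nat.card_Ico, smul_eq_mul]
    congr 1
  have hB2a : ∑ x ∈ Finset.Ico (k+1) (c+1), oreD k d n x
      = (c - k) * (3*k - 1 + (n - (k*(d-1)+2))) := by
    rw [Finset.sum_congr rfl (g := fun _ => 3*k - 1 + (n - (k*(d-1)+2)))
      (fun x hx => by
        rw [Finset.mem_Ico] at hx
        rw [oreD, if_neg (by omega), if_neg (by omega), if_pos (by omega), if_pos (by omega)]),
      Finset.sum_const, Nat.card_Ico, smul_eq_mul]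
    congr 1
    omega
  have hB2b : ∑ x ∈ Finset.Ico (c+1) ((d-2)*k+1), oreD k d n x
      = ((d-2)*k - c) * (3*k - 1) := by
    rw [Finset.sum_congr rfl (g := fun _ => 3*k - 1)
      (fun x hx => by
        rw [Finset.mem_Ico] at hx
        rw [oreD, if_neg (by omega), if_neg (by omega), if_pos (by omega), if_neg (by omega),
          Nat.add_zero]),
      Finset.sum_const, Nat.card_Ico, smul_eq_mul]
    congr 1
    omega
  have hB3a : ∑ x ∈ Finset.Ico ((d-2)*k+1) (c'+1), oreD k d n x
      = (c' - (d-2)*k) * (2*k + (n - (k*(d-1)+2))) := by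
    rw [Finset.sum_congr rfl (g := fun _ => 2*k + (n - (k*(d-1)+2)))
      (fun x hx => by
        rw [Finset.mem_Ico] at hx
        rw [oreD, if_neg (by omega), if_neg (by omega), if_neg (by omega), if_pos (by omega),
          if_pos (by omega)]),
      Finset.sum_const, Nat.card_Ico, smul_eq_mul]
    congr 1
    omega
  have hB3b : ∑ x ∈ Finset.Ico (c'+1) ((d-1)*k+1), oreD k d n x
      = ((d-1)*k - c') * (2*k) := by
    rw [Finset.sum_congr rfl (g := fun _ => 2*k + 0)
      (fun x hx => by
        rw [Finset.mem_Ico] at hx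
        rw [oreD, if_neg (by omega), if_neg (by omega), if_neg (by omega), if_pos (by omega),
          if_neg (by omega)]),
      Finset.sum_const, Nat.card_Ico, smul_eq_mul]
    rw [Nat.add_zero]
    congr 1
    omega
  have hB4 : ∑ x ∈ Finset.Ico ((d-1)*k+1) (k*(d-1)+2), oreD k d n x = k := by
    rw [Finset.sum_Ico_eq_sum_range]
    rw [show k*(d-1)+2 - ((d-1)*k+1) = 1 from by omega, Finset.sum_range_one]
    rw [oreD, if_neg (by omega), if_neg (by omega), if_neg (by omega), if_neg (by omega),
      if_pos (by omega)]
  have hB5 : ∑ x ∈ Finset.Ico (k*(d-1)+2) n, oreD k d n x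
      = (n - (k*(d-1)+2)) * (n - (k*(d-1)+2) - 1 + 3*k) := by
    rw [Finset.sum_congr rfl (g := fun _ => n - (k*(d-1)+2) - 1 + 3*k)
      (fun x hx => by
        rw [Finset.mem_Ico] at hx
        rw [oreD, if_neg (by omega), if_neg (by omega), if_neg (by omega), if_neg (by omega),
          if_neg (by omega)]),
      Finset.sum_const, Nat.card_Ico, smul_eq_mul]
  rw [Finset.range_eq_Ico,
    ← Finset.sum_Ico_consecutive _ (show (0:ℕ) ≤ 1 by omega) (show 1 ≤ n by omega),
    ← Finset.sum_Ico_consecutive _ (show (1:ℕ) ≤ k+1 by omega) (show k+1 ≤ n by omega),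
    ← Finset.sum_Ico_consecutive _ (show k+1 ≤ c+1 by omega) (show c+1 ≤ n by omega),
    ← Finset.sum_Ico_consecutive _ (show c+1 ≤ (d-2)*k+1 by omega)
        (show (d-2)*k+1 ≤ n by omega),
    ← Finset.sum_Ico_consecutive _ (show (d-2)*k+1 ≤ c'+1 by omega)
        (show c'+1 ≤ n by omega),
    ← Finset.sum_Ico_consecutive _ (show c'+1 ≤ (d-1)*k+1 by omega)
        (show (d-1)*k+1 ≤ n by omega),
    ← Finset.sum_Ico_consecutive _ (show (d-1)*k+1 ≤ k*(d-1)+2 by omega)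
        (show k*(d-1)+2 ≤ n from hn),
    hB0, hB1, hB2a, hB2b, hB3a, hB3b, hB4, hB5]
  omega


theorem oreExtremalGraph_isExtremal' (hk : 1 ≤ k) (hd : 4 ≤ d)
    (hn : k * (d - 1) + 2 ≤ n) :
    (oreExtremalGraph k d n).KConnected k ∧
    Fintype.card (Fin n) = n ∧
    (oreExtremalGraph k d n).diam = d ∧
    ((oreExtremalGraph k d n).edgeSet.ncard : ℤ) =
      ((3 * (d : ℤ) - 5) * (k : ℤ) ^ 2 + (5 - (d : ℤ)) * (k : ℤ)) / 2
        + ((n : ℤ) - k * d + k - 2) * (((n : ℤ) - k * d + k - 2) - 1) / 2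
        + 3 * (k : ℤ) * ((n : ℤ) - k * d + k - 2) := by
  classical
  have e3 : k*(d-1) = (d-1)*k := Nat.mul_comm _ _
  have f1 : 1*k ≤ (d-2)*k := Nat.mul_le_mul_right k (by omega)
  have f2 : (d-2)*k ≤ (d-1)*k := Nat.mul_le_mul_right k (by omega)
  refine ⟨⟨by rw [Fintype.card_fin]; omega, fun S hS => induce_connected hk hd hn hS⟩,
    Fintype.card_fin n, oreDiam_eq hk hd hn, ?_⟩
  have hcard : (oreExtremalGraph k d n).edgeSet.ncard
      = (oreExtremalGraph k d n).edgeFinset.card := Set.ncard_eq_toFinset_card' _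
  have hsum := SimpleGraph.sum_degrees_eq_twice_card_edges (oreExtremalGraph k d n)
  have hsum2 : ∑ v : Fin n, (oreExtremalGraph k d n).degree v
      = ∑ x ∈ Finset.range n, oreD k d n x := by
    rw [Finset.sum_congr rfl (fun v _ => deg_eq_D hk hd hn v)]
    exact Fin.sum_univ_eq_sum_range (fun x => oreD k d n x) n
  have hS := sum_oreD hk hd hn
  rw [hcard]
  set E : ℕ := (oreExtremalGraph k d n).edgeFinset.card with hE
  have hNat : 2*E = ∑ x ∈ Finset.range n, oreD k d n x := by rw [← hsum, hsum2]
  rw [hS] at hNat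
  set r : ℕ := n - (k*(d-1)+2) with hrdef
  have hr : k*(d-1)+2 + r = n := by omega
  set s : ℤ := (n : ℤ) - k*d + k - 2 with hs
  obtain ⟨q1, hq1⟩ : ∃ q : ℤ, (3*(d:ℤ)-5)*(k:ℤ)^2 + (5-(d:ℤ))*(k:ℤ) = 2*q := by
    rcases Int.even_or_odd (k : ℤ) with ⟨t, ht⟩ | ⟨t, ht⟩
    · exact ⟨(3*(d:ℤ)-5)*(2*t^2) + (5-(d:ℤ))*t, by rw [ht]; ring⟩
    · exact ⟨(3*(d:ℤ)-5)*(2*t^2+2*t) + (5-(d:ℤ))*t + (d:ℤ), by rw [ht]; ring⟩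
  obtain ⟨q2, hq2⟩ : ∃ q : ℤ, s * (s - 1) = 2*q := by
    rcases Int.even_or_odd s with ⟨t, ht⟩ | ⟨t, ht⟩
    · exact ⟨t*(2*t-1), by rw [ht]; ring⟩
    · exact ⟨(2*t+1)*t, by rw [ht]; ring⟩
  rw [hq1, hq2, Int.mul_ediv_cancel_left _ (by norm_num : (2:ℤ) ≠ 0),
    Int.mul_ediv_cancel_left _ (by norm_num : (2:ℤ) ≠ 0)]
  have hmul : r*(r-1+3*k) = (r*r - 1*r) + 3*k*r := by
    have h1 : r*(r-1+3*k) = r*(r-1) + r*(3*k) := Nat.mul_add r _ _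
    have h2 : r*(r-1) = (r-1)*r := Nat.mul_comm _ _
    have h3 : (r-1)*r = r*r - 1*r := Nat.sub_mul r 1 r
    have h4 : r*(3*k) = 3*k*r := by ring
    omega
  have hrr : 1*r ≤ r*r := by
    rcases Nat.eq_zero_or_pos r with h | h
    · simp [h]
    · exact Nat.mul_le_mul_right r h
  have hrz : (r:ℤ) = s := by
    have hr' : (k:ℤ)*((d:ℤ)-1)+2+(r:ℤ) = (n:ℤ) := by
      zify [show 1 ≤ d from by omega] at hr
      exact hr
    rw [hs]
    linear_combination hr'
  rw [hmul] at hNat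
  rcases Nat.lt_or_ge d 5 with hd4 | hd5
  · have hd4' : d = 4 := by omega
    subst hd4'
    norm_num at hNat
    rw [show 2*k - k = k from by omega,
      show 3*k - 2*k = k from by omega] at hNat
    zify [show 1 ≤ 3*k from by omega, show r ≤ r*r from by omega] at hNat
    rw [hrz] at hNat
    have h2 : (2:ℤ)*(E:ℤ) = 2*(q1 + q2 + 3*(k:ℤ)*s) := by
      linear_combination hNat + hq1 + hq2
    linarith
  · have f3 : 3*k ≤ (d-1)*k := Nat.mul_le_mul_right k (by omega)
    have f4 : 3*k ≤ (d-2)*k := Nat.mul_le_mul_right k (by omega)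
    rw [min_eq_left f4, min_eq_left f3, max_eq_left f4,
      show 3*k - k = 2*k from by omega,
      show (d-2)*k - (d-2)*k = 0 from by omega,
      Nat.zero_mul] at hNat
    zify [show 1 ≤ 3*k from by omega, hrr, f4, f2,
      show 1 ≤ d from by omega, show 2 ≤ d from by omega] at hNat
    rw [hrz] at hNat
    have h2 : (2:ℤ)*(E:ℤ) = 2*(q1 + q2 + 3*(k:ℤ)*s) := by
      linear_combination hNat + hq1 + hq2
    linarith

end OreAux

/-- The extremal graph for Ore's theorem when `d ≥ 4` is a simple `k`-connected graph of
order `n` and diameter `d` with exactly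
`((3d-5)k² + (5-d)k)/2 + C(n-kd+k-2, 2) + 3k(n-kd+k-2)` edges. -/
theorem oreExtremalGraph_isExtremal (k d n : ℕ) (hk : 1 ≤ k) (hd : 4 ≤ d)
    (hn : k * (d - 1) + 2 ≤ n) :
    (oreExtremalGraph k d n).KConnected k ∧
    Fintype.card (Fin n) = n ∧
    (oreExtremalGraph k d n).diam = d ∧
    ((oreExtremalGraph k d n).edgeSet.ncard : ℤ) =
      ((3 * (d : ℤ) - 5) * (k : ℤ) ^ 2 + (5 - (d : ℤ)) * (k : ℤ)) / 2
        + ((n : ℤ) - k * d + k - 2) * (((n : ℤ) - k * d + k - 2) - 1) / 2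
        + 3 * (k : ℤ) * ((n : ℤ) - k * d + k - 2) :=
  oreExtremalGraph_isExtremal' hk hd hn
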